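/- Let χ ∈ C³(Ω,ℝ) and let W ∈ C³(Ω,ℂ) satisfy the main Vekua equation ∂_z̄ W = (∂_z̄ χ) · conj(W) on Ω. Then the real-valued functions ψ^{(0)} = Im W and ψ^{(2)} = Re W satisfy H^{(0)} ψ^{(0)} = 0 and H^{(2)} ψ^{(2)} = 0, where H^{(0)} = −Δ + Σ_k((∂_kχ)² − ∂_k²χ) and H^{(2)} = −Δ + Σ_k((∂_kχ)² + ∂_k²χ). -/

import Mathlib

noncomputable section
open Complex Topology Filter

/-- ∂_x of a complex-valued function on ℂ ≅ ℝ². -/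
def dx (w : ℂ → ℂ) : ℂ → ℂ := fun z => fderiv ℝ w z 1

/-- ∂_y of a complex-valued function on ℂ ≅ ℝ². -/
def dy (w : ℂ → ℂ) : ℂ → ℂ := fun z => fderiv ℝ w z Complex.I

/-- ∂_z = (∂_x - i∂_y)/2. -/
def dz (w : ℂ → ℂ) : ℂ → ℂ := fun z => (dx w z - Complex.I * dy w z) / 2

/-- ∂_z̄ = (∂_x + i∂_y)/2. -/
def dzb (w : ℂ → ℂ) : ℂ → ℂ := fun z => (dx w z + Complex.I * dy w z) / 2

/-- A real-valued function viewed as complex-valued. -/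
def cc (χ : ℂ → ℝ) : ℂ → ℂ := fun z => (χ z : ℂ)

/-- V = ∂_z̄ - (∂_z̄χ)·C. -/
def Vop (χ : ℂ → ℝ) (w : ℂ → ℂ) : ℂ → ℂ :=
  fun z => dzb w z - dzb (cc χ) z * (starRingEnd ℂ) (w z)

/-- V̄ = ∂_z - (∂_zχ)·C. -/
def Vbar (χ : ℂ → ℝ) (w : ℂ → ℂ) : ℂ → ℂ :=
  fun z => dz w z - dz (cc χ) z * (starRingEnd ℂ) (w z)

/-- V₁ = ∂_z̄ + (∂_zχ)·C. -/
def V1 (χ : ℂ → ℝ) (w : ℂ → ℂ) : ℂ → ℂ :=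
  fun z => dzb w z + dz (cc χ) z * (starRingEnd ℂ) (w z)

/-- V̄₁ = ∂_z + (∂_z̄χ)·C. -/
def Vbar1 (χ : ℂ → ℝ) (w : ℂ → ℂ) : ℂ → ℂ :=
  fun z => dz w z + dzb (cc χ) z * (starRingEnd ℂ) (w z)

/-- Partial derivative ∂_i of a real-valued function on ℂ ≅ ℝ². -/
def pdc (i : Fin 2) (f : ℂ → ℝ) : ℂ → ℝ :=
  fun z => fderiv ℝ f z (if i = 0 then 1 else Complex.I)

/-- H^{(0)} = -Δ + Σ_k ((∂_kχ)² - ∂_k²χ) acting on real functions on ℂ. -/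
def H0c (χ f : ℂ → ℝ) : ℂ → ℝ := fun z =>
  -(pdc 0 (pdc 0 f) z + pdc 1 (pdc 1 f) z) +
    (∑ k : Fin 2, ((pdc k χ z) ^ 2 - pdc k (pdc k χ) z)) * f z

/-- H^{(2)} = -Δ + Σ_k ((∂_kχ)² + ∂_k²χ). -/
def H2c (χ f : ℂ → ℝ) : ℂ → ℝ := fun z =>
  -(pdc 0 (pdc 0 f) z + pdc 1 (pdc 1 f) z) +
    (∑ k : Fin 2, ((pdc k χ z) ^ 2 + pdc k (pdc k χ) z)) * f z

/-- H^{(1)}_{ij} = δ_{ij} H^{(0)} + 2∂_i∂_jχ. -/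
def H1c (χ : ℂ → ℝ) (i j : Fin 2) (f : ℂ → ℝ) : ℂ → ℝ := fun z =>
  (if i = j then H0c χ f z else 0) + 2 * pdc i (pdc j χ) z * f z

lemma fderiv_conj_apply (w : ℂ → ℂ) (z v : ℂ) (hw : DifferentiableAt ℝ w z) :
    fderiv ℝ (fun ζ => (starRingEnd ℂ) (w ζ)) z v = (starRingEnd ℂ) (fderiv ℝ w z v) := by
  have h : (fun ζ => (starRingEnd ℂ) (w ζ)) = (Complex.conjCLE : ℂ → ℂ) ∘ w := rfl
  rw [h, fderiv_comp z Complex.conjCLE.differentiable.differentiableAt hw,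
    ContinuousLinearEquiv.fderiv]
  rfl

lemma fderiv_cc_apply (g : ℂ → ℝ) (z v : ℂ) :
    fderiv ℝ (cc g) z v = ((fderiv ℝ g z v : ℝ) : ℂ) := by
  by_cases h : DifferentiableAt ℝ g z
  · have h1 : cc g = ⇑Complex.ofRealCLM ∘ g := rfl
    rw [h1, fderiv_comp z Complex.ofRealCLM.differentiable.differentiableAt h,
      ContinuousLinearMap.fderiv]
    rfl
  · have h2 : ¬ DifferentiableAt ℝ (cc g) z := by
      intro hc
      have hg : g = ⇑Complex.reCLM ∘ cc g := rfl
      exact h (hg ▸ (Complex.reCLM.differentiable.differentiableAt.comp z hc))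
    rw [fderiv_zero_of_not_differentiableAt h, fderiv_zero_of_not_differentiableAt h2]
    simp

lemma fderiv_re_apply (w : ℂ → ℂ) (z v : ℂ) (hw : DifferentiableAt ℝ w z) :
    fderiv ℝ (fun ζ => (w ζ).re) z v = (fderiv ℝ w z v).re := by
  have h : (fun ζ => (w ζ).re) = ⇑Complex.reCLM ∘ w := rfl
  rw [h, fderiv_comp z Complex.reCLM.differentiable.differentiableAt hw,
    ContinuousLinearMap.fderiv]
  rfl

lemma fderiv_im_apply (w : ℂ → ℂ) (z v : ℂ) (hw : DifferentiableAt ℝ w z) :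
    fderiv ℝ (fun ζ => (w ζ).im) z v = (fderiv ℝ w z v).im := by
  have h : (fun ζ => (w ζ).im) = ⇑Complex.imCLM ∘ w := rfl
  rw [h, fderiv_comp z Complex.imCLM.differentiable.differentiableAt hw,
    ContinuousLinearMap.fderiv]
  rfl

lemma diff_dv (f : ℂ → ℂ) (z v : ℂ) (hf : DifferentiableAt ℝ (fderiv ℝ f) z) :
    DifferentiableAt ℝ (fun ζ => fderiv ℝ f ζ v) z :=
  (ContinuousLinearMap.apply ℝ ℂ v).differentiable.differentiableAt.comp z hf

lemma fderiv_fderiv_apply (f : ℂ → ℂ) (z v w : ℂ) (hf : DifferentiableAt ℝ (fderiv ℝ f) z) :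
    fderiv ℝ (fun ζ => fderiv ℝ f ζ w) z v = fderiv ℝ (fderiv ℝ f) z v w := by
  have h : (fun ζ => fderiv ℝ f ζ w) = ⇑(ContinuousLinearMap.apply ℝ ℂ w) ∘ fderiv ℝ f := rfl
  rw [h, fderiv_comp z (ContinuousLinearMap.apply ℝ ℂ w).differentiable.differentiableAt hf,
    ContinuousLinearMap.fderiv]
  rfl

lemma combo_deriv (f : ℂ → ℂ) (z : ℂ) (hf : DifferentiableAt ℝ (fderiv ℝ f) z) (v : ℂ) :
    fderiv ℝ (fun ζ => fderiv ℝ f ζ 1 + Complex.I * fderiv ℝ f ζ Complex.I) z v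
      = fderiv ℝ (fderiv ℝ f) z v 1 + Complex.I * fderiv ℝ (fderiv ℝ f) z v Complex.I := by
  rw [fderiv_fun_add (diff_dv f z 1 hf) ((diff_dv f z Complex.I hf).const_mul Complex.I),
    fderiv_const_mul (diff_dv f z Complex.I hf) Complex.I]
  simp [ContinuousLinearMap.add_apply, ContinuousLinearMap.smul_apply, smul_eq_mul,
    fderiv_fderiv_apply f z v 1 hf, fderiv_fderiv_apply f z v Complex.I hf]

lemma second_re (W : ℂ → ℂ) (Ω : Set ℂ) (hΩ : IsOpen Ω) (z : ℂ) (hz : z ∈ Ω)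
    (hW : ContDiffOn ℝ 3 W Ω) (v w : ℂ) :
    fderiv ℝ (fun ζ => fderiv ℝ (fun ξ => (W ξ).re) ζ w) z v
      = (fderiv ℝ (fderiv ℝ W) z v w).re := by
  have hmem : Ω ∈ 𝓝 z := hΩ.mem_nhds hz
  have hWd : DifferentiableAt ℝ (fderiv ℝ W) z :=
    ((hW.contDiffAt hmem).fderiv_right (m := 2) le_rfl).differentiableAt two_ne_zero
  have hE : (fun ζ => fderiv ℝ (fun ξ => (W ξ).re) ζ w) =ᶠ[𝓝 z]
      (fun ζ => (fderiv ℝ W ζ w).re) := by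
    filter_upwards [hΩ.eventually_mem hz] with ζ hζ
    exact fderiv_re_apply W ζ w ((hW.contDiffAt (hΩ.mem_nhds hζ)).differentiableAt
      (by norm_num))
  rw [hE.fderiv_eq, fderiv_re_apply _ z v (diff_dv W z w hWd), fderiv_fderiv_apply W z v w hWd]

lemma second_im (W : ℂ → ℂ) (Ω : Set ℂ) (hΩ : IsOpen Ω) (z : ℂ) (hz : z ∈ Ω)
    (hW : ContDiffOn ℝ 3 W Ω) (v w : ℂ) :
    fderiv ℝ (fun ζ => fderiv ℝ (fun ξ => (W ξ).im) ζ w) z v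
      = (fderiv ℝ (fderiv ℝ W) z v w).im := by
  have hmem : Ω ∈ 𝓝 z := hΩ.mem_nhds hz
  have hWd : DifferentiableAt ℝ (fderiv ℝ W) z :=
    ((hW.contDiffAt hmem).fderiv_right (m := 2) le_rfl).differentiableAt two_ne_zero
  have hE : (fun ζ => fderiv ℝ (fun ξ => (W ξ).im) ζ w) =ᶠ[𝓝 z]
      (fun ζ => (fderiv ℝ W ζ w).im) := by
    filter_upwards [hΩ.eventually_mem hz] with ζ hζ
    exact fderiv_im_apply W ζ w ((hW.contDiffAt (hΩ.mem_nhds hζ)).differentiableAt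
      (by norm_num))
  rw [hE.fderiv_eq, fderiv_im_apply _ z v (diff_dv W z w hWd), fderiv_fderiv_apply W z v w hWd]

/-- Solutions of the main Vekua equation give ground states of H^{(0)} and H^{(2)}. -/
theorem Vekua_to_ground_states (Ω : Set ℂ) (hΩ : IsOpen Ω)
    (χ : ℂ → ℝ) (hχ : ContDiffOn ℝ 3 χ Ω)
    (W : ℂ → ℂ) (hW : ContDiffOn ℝ 3 W Ω)
    (hVekua : ∀ z ∈ Ω, dzb W z = dzb (cc χ) z * (starRingEnd ℂ) (W z)) :
    ∀ z ∈ Ω,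
      H0c χ (fun ζ => (W ζ).im) z = 0 ∧
      H2c χ (fun ζ => (W ζ).re) z = 0 := by
  intro z hz
  have hmem : Ω ∈ 𝓝 z := hΩ.mem_nhds hz
  have hχcΩ : ContDiffOn ℝ 3 (cc χ) Ω := Complex.ofRealCLM.contDiff.comp_contDiffOn hχ
  have hWz : ContDiffAt ℝ 3 W z := hW.contDiffAt hmem
  have hχz : ContDiffAt ℝ 3 (cc χ) z := hχcΩ.contDiffAt hmem
  have hWd : DifferentiableAt ℝ (fderiv ℝ W) z :=
    (hWz.fderiv_right (m := 2) le_rfl).differentiableAt two_ne_zero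
  have hχd : DifferentiableAt ℝ (fderiv ℝ (cc χ)) z :=
    (hχz.fderiv_right (m := 2) le_rfl).differentiableAt two_ne_zero
  set A := fderiv ℝ (fderiv ℝ W) z with hA
  set B := fderiv ℝ (fderiv ℝ (cc χ)) z with hB
  set P : ℂ → ℂ := fun ζ => fderiv ℝ (cc χ) ζ 1 + Complex.I * fderiv ℝ (cc χ) ζ Complex.I
    with hP
  -- the Vekua equation as a first-order identity near z
  have hE : (fun ζ => fderiv ℝ W ζ 1 + Complex.I * fderiv ℝ W ζ Complex.I) =ᶠ[𝓝 z]
      (fun ζ => P ζ * (starRingEnd ℂ) (W ζ)) := by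
    filter_upwards [hmem] with ζ hζ
    have h := hVekua ζ hζ
    simp only [dzb, dx, dy] at h
    field_simp at h
    linear_combination h
  -- differentiate it
  have key : ∀ v : ℂ, A v 1 + Complex.I * A v Complex.I
      = (B v 1 + Complex.I * B v Complex.I) * (starRingEnd ℂ) (W z)
        + P z * (starRingEnd ℂ) (fderiv ℝ W z v) := by
    intro v
    have hPd : DifferentiableAt ℝ P z :=
      (diff_dv _ z 1 hχd).add ((diff_dv _ z Complex.I hχd).const_mul Complex.I)
    have hWdiff : DifferentiableAt ℝ W z := hWz.differentiableAt (by norm_num)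
    have hcd : DifferentiableAt ℝ (fun ζ => (starRingEnd ℂ) (W ζ)) z :=
      Complex.conjCLE.differentiable.differentiableAt.comp z hWdiff
    have h1 := hE.fderiv_eq (𝕜 := ℝ)
    have h2 : fderiv ℝ (fun ζ => P ζ * (starRingEnd ℂ) (W ζ)) z v
        = (B v 1 + Complex.I * B v Complex.I) * (starRingEnd ℂ) (W z)
          + P z * (starRingEnd ℂ) (fderiv ℝ W z v) := by
      rw [fderiv_fun_mul hPd hcd]
      have hPderiv : fderiv ℝ P z v = B v 1 + Complex.I * B v Complex.I :=
        combo_deriv (cc χ) z hχd v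
      simp only [ContinuousLinearMap.add_apply, ContinuousLinearMap.smul_apply, smul_eq_mul,
        fderiv_conj_apply W z v hWdiff, hPderiv]
      ring
    rw [← combo_deriv W z hWd v, h1, h2]
  -- symmetry of second derivatives
  have sW : A 1 Complex.I = A Complex.I 1 :=
    (hWz.isSymmSndFDerivAt (by norm_num)) 1 Complex.I
  have sχ : B 1 Complex.I = B Complex.I 1 :=
    (hχz.isSymmSndFDerivAt (by norm_num)) 1 Complex.I
  -- conjugated Vekua at z
  have hconj : (starRingEnd ℂ) (fderiv ℝ W z 1)
      - Complex.I * (starRingEnd ℂ) (fderiv ℝ W z Complex.I)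
      = (starRingEnd ℂ) (P z) * W z := by
    have h0 := hE.self_of_nhds
    have h1 := congrArg (starRingEnd ℂ) h0
    simp only [map_add, map_mul, Complex.conj_I, Complex.conj_conj] at h1
    linear_combination h1
  -- the main complex identity: ΔW = Δχ · conj W + |∇χ|² · W
  have hMain : A 1 1 + A Complex.I Complex.I
      = (B 1 1 + B Complex.I Complex.I) * (starRingEnd ℂ) (W z)
        + (P z * (starRingEnd ℂ) (P z)) * W z := by
    have e1 := key 1
    have eI := key Complex.I
    linear_combination e1 - Complex.I * eI - Complex.I * sW
      + Complex.I * ((starRingEnd ℂ) (W z)) * sχ + P z * hconj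
      + ((A Complex.I) Complex.I - (starRingEnd ℂ) (W z) * (B Complex.I) Complex.I)
        * Complex.I_sq
  -- identify the χ-terms as real quantities
  have hcc1 : (fun ζ => fderiv ℝ (cc χ) ζ 1) = cc (pdc 0 χ) := by
    funext ζ
    simp [cc, pdc, fderiv_cc_apply]
  have hccI : (fun ζ => fderiv ℝ (cc χ) ζ Complex.I) = cc (pdc 1 χ) := by
    funext ζ
    simp [cc, pdc, fderiv_cc_apply]
  have hB11 : B 1 1 = ((pdc 0 (pdc 0 χ) z : ℝ) : ℂ) := by
    rw [hB, ← fderiv_fderiv_apply (cc χ) z 1 1 hχd, hcc1, fderiv_cc_apply]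
    simp [pdc]
  have hBII : B Complex.I Complex.I = ((pdc 1 (pdc 1 χ) z : ℝ) : ℂ) := by
    rw [hB, ← fderiv_fderiv_apply (cc χ) z Complex.I Complex.I hχd, hccI, fderiv_cc_apply]
    simp [pdc]
  have hPz : P z = ((pdc 0 χ z : ℝ) : ℂ) + Complex.I * ((pdc 1 χ z : ℝ) : ℂ) := by
    rw [hP]
    simp [pdc, fderiv_cc_apply]
  have hPP : P z * (starRingEnd ℂ) (P z) = ((pdc 0 χ z ^ 2 + pdc 1 χ z ^ 2 : ℝ) : ℂ) := by
    rw [hPz]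
    simp only [map_add, map_mul, Complex.conj_I, Complex.conj_ofReal]
    push_cast
    linear_combination (-((pdc 1 χ z : ℂ))^2) * Complex.I_sq
  rw [hB11, hBII, hPP] at hMain
  rw [Complex.ext_iff] at hMain
  obtain ⟨hRe, hIm⟩ := hMain
  simp only [Complex.add_re, Complex.add_im, Complex.mul_re, Complex.mul_im,
    Complex.ofReal_re, Complex.ofReal_im, Complex.conj_re, Complex.conj_im] at hRe hIm
  -- second derivatives of the components
  have h0re : pdc 0 (pdc 0 (fun ζ => (W ζ).re)) z = (A 1 1).re := by
    simp only [pdc, if_pos rfl]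
    exact second_re W Ω hΩ z hz hW 1 1
  have h1re : pdc 1 (pdc 1 (fun ζ => (W ζ).re)) z = (A Complex.I Complex.I).re := by
    simp only [pdc, if_neg (by decide : ¬ (1 : Fin 2) = 0)]
    exact second_re W Ω hΩ z hz hW Complex.I Complex.I
  have h0im : pdc 0 (pdc 0 (fun ζ => (W ζ).im)) z = (A 1 1).im := by
    simp only [pdc, if_pos rfl]
    exact second_im W Ω hΩ z hz hW 1 1
  have h1im : pdc 1 (pdc 1 (fun ζ => (W ζ).im)) z = (A Complex.I Complex.I).im := by
    simp only [pdc, if_neg (by decide : ¬ (1 : Fin 2) = 0)]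
    exact second_im W Ω hΩ z hz hW Complex.I Complex.I
  constructor
  · simp only [H0c, Fin.sum_univ_two, h0im, h1im]
    linear_combination -hIm
  · simp only [H2c, Fin.sum_univ_two, h0re, h1re]
    linear_combination -hRe
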